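/- Let n ≥ 1 and let f : ℝ₍₎₀ⁿ → ℝ₍₎₀ⁿ (the open positive orthant) be monotone and positively homogeneous. If there is no pair (I, J) of disjoint subsets of {1,…,n} such that I is a multiplicative MIN-dominion for f and J is a multiplicative MAX-dominion for f, then f has a positive eigenvector: there exist λ > 0 and u ∈ ℝ₍₎₀ⁿ with f(u) = λ·u. -/

import Mathlib

open Filter Topology

namespace PFAux

variable {n : ℕ}

/-- Log-exp conjugate of `f`. -/
noncomputable def F (f : (Fin n → ℝ) → (Fin n → ℝ)) (x : Fin n → ℝ) : Fin n → ℝ :=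
  fun i => Real.log (f (fun j => Real.exp (x j)) i)

theorem fexp_pos (f : (Fin n → ℝ) → (Fin n → ℝ))
    (hpos : ∀ x, (∀ i, 0 < x i) → ∀ i, 0 < f x i) (x : Fin n → ℝ) (i : Fin n) :
    0 < f (fun j => Real.exp (x j)) i :=
  hpos _ (fun j => Real.exp_pos _) i

theorem exp_F (f : (Fin n → ℝ) → (Fin n → ℝ))
    (hpos : ∀ x, (∀ i, 0 < x i) → ∀ i, 0 < f x i) (x : Fin n → ℝ) (i : Fin n) :
    Real.exp (F f x i) = f (fun j => Real.exp (x j)) i :=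
  Real.exp_log (fexp_pos f hpos x i)

theorem F_mono (f : (Fin n → ℝ) → (Fin n → ℝ))
    (hpos : ∀ x, (∀ i, 0 < x i) → ∀ i, 0 < f x i)
    (hmono : ∀ x y, (∀ i, 0 < x i) → (∀ i, 0 < y i) → x ≤ y → f x ≤ f y)
    {x y : Fin n → ℝ} (h : x ≤ y) : F f x ≤ F f y := fun i =>
  Real.log_le_log (fexp_pos f hpos x i)
    (hmono _ _ (fun j => Real.exp_pos _) (fun j => Real.exp_pos _)
      (fun j => Real.exp_le_exp.2 (h j)) i)

theorem F_add (f : (Fin n → ℝ) → (Fin n → ℝ))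
    (hpos : ∀ x, (∀ i, 0 < x i) → ∀ i, 0 < f x i)
    (hhom : ∀ t : ℝ, 0 < t → ∀ x, (∀ i, 0 < x i) → f (t • x) = t • f x)
    (x : Fin n → ℝ) (c : ℝ) :
    F f (fun j => x j + c) = fun i => F f x i + c := by
  funext i
  have h1 : (fun j => Real.exp (x j + c)) = Real.exp c • (fun j => Real.exp (x j)) := by
    funext j
    simp [Real.exp_add, mul_comm]
  show Real.log (f (fun j => Real.exp (x j + c)) i) = _
  rw [h1, hhom _ (Real.exp_pos c) _ (fun j => Real.exp_pos _)]
  have h2 : (Real.exp c • f fun j => Real.exp (x j)) i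
      = Real.exp c * f (fun j => Real.exp (x j)) i := rfl
  rw [h2, Real.log_mul (ne_of_gt (Real.exp_pos c)) (ne_of_gt (fexp_pos f hpos x i)),
    Real.log_exp]
  show c + F f x i = F f x i + c
  ring

theorem F_lip (f : (Fin n → ℝ) → (Fin n → ℝ))
    (hpos : ∀ x, (∀ i, 0 < x i) → ∀ i, 0 < f x i)
    (hmono : ∀ x y, (∀ i, 0 < x i) → (∀ i, 0 < y i) → x ≤ y → f x ≤ f y)
    (hhom : ∀ t : ℝ, 0 < t → ∀ x, (∀ i, 0 < x i) → f (t • x) = t • f x) :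
    LipschitzWith 1 (F f) := by
  have key : ∀ a b : Fin n → ℝ, ∀ i, F f a i - F f b i ≤ dist a b := by
    intro a b i
    have h1 : a ≤ fun j => b j + dist a b := by
      intro j
      have h2 := dist_le_pi_dist a b j
      rw [Real.dist_eq] at h2
      show a j ≤ b j + dist a b
      linarith [le_abs_self (a j - b j)]
    have h3 := F_mono f hpos hmono h1 i
    rw [F_add f hpos hhom b (dist a b)] at h3
    have h4 : F f a i ≤ F f b i + dist a b := h3
    linarith
  rw [lipschitzWith_iff_dist_le_mul]
  intro x y
  rw [NNReal.coe_one, one_mul, dist_pi_le_iff dist_nonneg]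
  intro i
  rw [Real.dist_eq, abs_sub_le_iff]
  refine ⟨key x y i, ?_⟩
  have := key y x i
  rwa [dist_comm] at this

theorem exists_fp (f : (Fin n → ℝ) → (Fin n → ℝ))
    (hpos : ∀ x, (∀ i, 0 < x i) → ∀ i, 0 < f x i)
    (hmono : ∀ x y, (∀ i, 0 < x i) → (∀ i, 0 < y i) → x ≤ y → f x ≤ f y)
    (hhom : ∀ t : ℝ, 0 < t → ∀ x, (∀ i, 0 < x i) → f (t • x) = t • f x)
    (β : ℝ) (h0 : 0 < β) (h1 : β < 1) :
    ∃ x : Fin n → ℝ, F f x = β⁻¹ • x := by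
  set K : NNReal := ⟨β, h0.le⟩ with hK
  have hlip : LipschitzWith K (fun x => β • F f x) := by
    rw [lipschitzWith_iff_dist_le_mul]
    intro x y
    have hF := (F_lip f hpos hmono hhom).dist_le_mul x y
    rw [NNReal.coe_one, one_mul] at hF
    have : dist (β • F f x) (β • F f y) = β * dist (F f x) (F f y) := by
      rw [dist_smul₀, Real.norm_eq_abs, abs_of_pos h0]
    rw [this]
    have hKβ : (K : ℝ) = β := rfl
    rw [hKβ]
    exact mul_le_mul_of_nonneg_left hF h0.le
  have hc : ContractingWith K (fun x => β • F f x) := ⟨by rwa [← NNReal.coe_lt_one], hlip⟩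
  obtain ⟨y, hy, -⟩ := hc.exists_fixedPoint 0 (edist_ne_top _ _)
  refine ⟨y, ?_⟩
  have h2 : β • F f y = y := hy
  calc F f y = β⁻¹ • (β • F f y) := (inv_smul_smul₀ (ne_of_gt h0) _).symm
  _ = β⁻¹ • y := by rw [h2]

theorem extract_one (a : ℕ → ℝ) (ha : ∀ k, a k ≤ 0) :
    ∃ φ : ℕ → ℕ, StrictMono φ ∧
      (Tendsto (a ∘ φ) atTop atBot ∨ ∃ L, Tendsto (a ∘ φ) atTop (𝓝 L)) := by
  by_cases h : ∃ C : ℝ, ∃ᶠ k in atTop, -C ≤ a k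
  · obtain ⟨C, hC⟩ := h
    obtain ⟨φ, hφ, hφC⟩ := Filter.extraction_of_frequently_atTop hC
    have hmem : ∀ k, (a ∘ φ) k ∈ Set.Icc (-C) 0 := fun k => ⟨hφC k, ha _⟩
    obtain ⟨L, -, ψ, hψ, hL⟩ := (isCompact_Icc (a := -C) (b := (0:ℝ))).tendsto_subseq hmem
    exact ⟨φ ∘ ψ, hφ.comp hψ, Or.inr ⟨L, hL⟩⟩
  · push_neg at h
    refine ⟨id, strictMono_id, Or.inl ?_⟩
    rw [Filter.tendsto_atBot]
    intro b
    have h2 : ∀ᶠ k in atTop, ¬ (-(-b) ≤ a k) := (h (-b)).mono fun k hk => not_le.2 hk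
    filter_upwards [h2] with k hk
    rw [neg_neg] at hk
    push_neg at hk
    exact hk.le

theorem extract_many (N : ℕ) (a : Fin N → ℕ → ℝ) (ha : ∀ i k, a i k ≤ 0) :
    ∃ φ : ℕ → ℕ, StrictMono φ ∧ ∀ i,
      (Tendsto (a i ∘ φ) atTop atBot ∨ ∃ L, Tendsto (a i ∘ φ) atTop (𝓝 L)) := by
  induction N with
  | zero => exact ⟨id, strictMono_id, fun i => i.elim0⟩
  | succ N ih =>
    obtain ⟨φ, hφ, hlim⟩ := ih (fun i => a i.castSucc) (fun i k => ha _ _)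
    obtain ⟨ψ, hψ, hlast⟩ := extract_one (a (Fin.last N) ∘ φ) (fun k => ha _ _)
    refine ⟨φ ∘ ψ, hφ.comp hψ, ?_⟩
    intro i
    rcases Fin.eq_castSucc_or_eq_last i with ⟨j, rfl⟩ | rfl
    · rcases hlim j with h | ⟨L, h⟩
      · exact Or.inl (h.comp hψ.tendsto_atTop)
      · exact Or.inr ⟨L, h.comp hψ.tendsto_atTop⟩
    · rcases hlast with h | ⟨L, h⟩
      · exact Or.inl h
      · exact Or.inr ⟨L, h⟩

end PFAux

/-- `Δ` is a multiplicative MIN-dominion for `f`: there is `C` with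
`f_i(exp(t·e_{Δᶜ})) ≤ C` for all `i ∈ Δ` and `t ≥ 0`. -/
def MultMinDominion (n : ℕ) (f : (Fin n → ℝ) → (Fin n → ℝ)) (Δ : Set (Fin n)) : Prop :=
  Δ.Nonempty ∧ ∃ C : ℝ, ∀ i ∈ Δ, ∀ t : ℝ, 0 ≤ t →
    f (fun j => Real.exp (Δᶜ.indicator (fun _ => t) j)) i ≤ C

/-- `Δ` is a multiplicative MAX-dominion for `f`: there is `c > 0` with
`f_i(exp(−t·e_{Δᶜ})) ≥ c` for all `i ∈ Δ` and `t ≥ 0`. -/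
def MultMaxDominion (n : ℕ) (f : (Fin n → ℝ) → (Fin n → ℝ)) (Δ : Set (Fin n)) : Prop :=
  Δ.Nonempty ∧ ∃ c : ℝ, 0 < c ∧ ∀ i ∈ Δ, ∀ t : ℝ, 0 ≤ t →
    c ≤ f (fun j => Real.exp (Δᶜ.indicator (fun _ => -t) j)) i

theorem stmt0 (n : ℕ) (hn : 1 ≤ n)
    (f : (Fin n → ℝ) → (Fin n → ℝ))
    (hpos : ∀ x, (∀ i, 0 < x i) → ∀ i, 0 < f x i)
    (hmono : ∀ x y, (∀ i, 0 < x i) → (∀ i, 0 < y i) → x ≤ y → f x ≤ f y)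
    (hhom : ∀ t : ℝ, 0 < t → ∀ x, (∀ i, 0 < x i) → f (t • x) = t • f x)
    (hdom : ¬ ∃ I J : Set (Fin n),
      Disjoint I J ∧ MultMinDominion n f I ∧ MultMaxDominion n f J) :
    ∃ lam : ℝ, 0 < lam ∧ ∃ u : Fin n → ℝ, (∀ i, 0 < u i) ∧ f u = lam • u := by
  haveI : NeZero n := ⟨by omega⟩
  have hne : (Finset.univ : Finset (Fin n)).Nonempty := Finset.univ_nonempty
  -- discounted fixed points
  have hfp : ∀ k : ℕ, ∃ x : Fin n → ℝ,
      PFAux.F f x = (((k:ℝ)+1)/((k:ℝ)+2))⁻¹ • x := by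
    intro k
    refine PFAux.exists_fp f hpos hmono hhom _ (by positivity) ?_
    rw [div_lt_one (by positivity)]
    linarith
  choose x hx using hfp
  set binv : ℕ → ℝ := fun k => (((k:ℝ)+1)/((k:ℝ)+2))⁻¹ with hbinvdef
  have hbinv_eq : ∀ k, binv k = ((k:ℝ)+2)/((k:ℝ)+1) := by
    intro k; rw [hbinvdef]; simp [inv_div]
  have hbinv1 : ∀ k, 1 ≤ binv k := by
    intro k; rw [hbinv_eq k, le_div_iff₀ (by positivity)]; linarith
  have hbinv2 : ∀ k, binv k ≤ 2 := by
    intro k; rw [hbinv_eq k, div_le_iff₀ (by positivity)]; linarith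
  have hbinv_tend : Tendsto binv atTop (𝓝 1) := by
    have heq : binv = fun k : ℕ => 1 + ((k:ℝ)+1)⁻¹ := by
      funext k
      rw [hbinv_eq k]
      field_simp
      ring
    rw [heq]
    have h0 : Tendsto (fun k : ℕ => ((k:ℝ)+1)⁻¹) atTop (𝓝 0) :=
      tendsto_inv_atTop_zero.comp
        (tendsto_atTop_add_const_right _ 1 tendsto_natCast_atTop_atTop)
    simpa using tendsto_const_nhds.add h0
  set M : ℕ → ℝ := fun k => Finset.univ.sup' hne (x k) with hMdef
  set z : ℕ → Fin n → ℝ := fun k i => x k i - M k with hzdef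
  set m : ℕ → ℝ := fun k => Finset.univ.inf' hne (z k) with hmdef
  set mu : ℕ → ℝ := fun k => (binv k - 1) * M k with hmudef
  have hzle : ∀ k i, z k i ≤ 0 := by
    intro k i
    have := Finset.le_sup' (x k) (Finset.mem_univ i)
    simp only [hzdef]
    linarith [this]
  have hzzero : ∀ k, ∃ j, z k j = 0 := by
    intro k
    obtain ⟨j, -, hj⟩ := Finset.exists_mem_eq_sup' hne (x k)
    exact ⟨j, by simp only [hzdef]; rw [← hj]; ring⟩
  have hmz : ∀ k i, m k ≤ z k i := fun k i => Finset.inf'_le _ (Finset.mem_univ i)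
  have hmle : ∀ k, m k ≤ 0 := by
    intro k
    obtain ⟨j, hj⟩ := hzzero k
    have := hmz k j
    linarith
  have hFz : ∀ k i, PFAux.F f (z k) i = binv k * z k i + mu k := by
    intro k i
    have h1 : z k = fun j => x k j + (-(M k)) := by
      funext j; simp only [hzdef]; ring
    have h2 : PFAux.F f (z k) i = PFAux.F f (x k) i + (-(M k)) := by
      rw [h1, PFAux.F_add f hpos hhom]
    have h3 : PFAux.F f (x k) i = binv k * x k i := by
      rw [hx k]; rfl
    have h4 : x k i = z k i + M k := by simp only [hzdef]; ring
    rw [h2, h3, h4, hmudef]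
    ring
  set A0 : ℝ := Finset.univ.sup' hne (PFAux.F f 0) with hA0def
  set a0 : ℝ := Finset.univ.inf' hne (PFAux.F f 0) with ha0def
  have hmuU : ∀ k, mu k ≤ A0 := by
    intro k
    obtain ⟨j, hj⟩ := hzzero k
    have h1 : PFAux.F f (z k) j = mu k := by rw [hFz k j, hj]; ring
    have h2 : PFAux.F f (z k) j ≤ PFAux.F f 0 j :=
      PFAux.F_mono f hpos hmono (fun i => hzle k i) j
    have h3 : PFAux.F f 0 j ≤ A0 := Finset.le_sup' _ (Finset.mem_univ j)
    linarith
  have hmuL : ∀ k, a0 ≤ mu k := by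
    intro k
    obtain ⟨i, -, hi⟩ := Finset.exists_mem_eq_inf' hne (z k)
    have h1 : (fun _ : Fin n => m k) ≤ z k := fun j => hmz k j
    have h2 : PFAux.F f (fun _ : Fin n => m k) i ≤ PFAux.F f (z k) i :=
      PFAux.F_mono f hpos hmono h1 i
    have h3 : PFAux.F f (fun _ : Fin n => m k) i = PFAux.F f 0 i + m k := by
      have h4 : (fun _ : Fin n => m k) = fun j => (0 : Fin n → ℝ) j + m k := by
        funext j; simp
      rw [h4, PFAux.F_add f hpos hhom]
    have h5 : a0 ≤ PFAux.F f 0 i := Finset.inf'_le _ (Finset.mem_univ i)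
    have h6 := hFz k i
    have h7 : z k i = m k := hi.symm
    rw [h7] at h6
    nlinarith [hbinv1 k, hmle k]
  by_cases hA : ∃ C : ℝ, ∃ᶠ k in atTop, -C ≤ m k
  · -- Case A: bounded subsequence, get eigenvector by passing to the limit
    obtain ⟨C, hC⟩ := hA
    obtain ⟨φ, hφ, hφC⟩ := Filter.extraction_of_frequently_atTop hC
    have hball : ∀ k, z (φ k) ∈ Metric.closedBall (0 : Fin n → ℝ) (max C 0) := by
      intro k
      rw [Metric.mem_closedBall, dist_zero_right,
        pi_norm_le_iff_of_nonneg (le_max_right C 0)]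
      intro i
      rw [Real.norm_eq_abs, abs_le]
      constructor
      · have h1 := hmz (φ k) i
        have h2 := hφC k
        have h3 : -(max C 0) ≤ -C := by simp [le_max_left]
        linarith
      · exact (hzle _ i).trans (le_max_right C 0)
    obtain ⟨u, -, ψ, hψ, hu⟩ := (isCompact_closedBall _ _).tendsto_subseq hball
    have hmuIcc : ∀ k, mu (φ (ψ k)) ∈ Set.Icc a0 A0 := fun k => ⟨hmuL _, hmuU _⟩
    obtain ⟨lam0, -, ψ2, hψ2, hlam0⟩ := (isCompact_Icc (a := a0) (b := A0)).tendsto_subseq hmuIcc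
    have hκ : Tendsto (fun k => φ (ψ (ψ2 k))) atTop atTop :=
      (hφ.comp (hψ.comp hψ2)).tendsto_atTop
    have hzu : Tendsto (fun k => z (φ (ψ (ψ2 k)))) atTop (𝓝 u) :=
      hu.comp hψ2.tendsto_atTop
    have hmuκ : Tendsto (fun k => mu (φ (ψ (ψ2 k)))) atTop (𝓝 lam0) := hlam0
    have hbκ : Tendsto (fun k => binv (φ (ψ (ψ2 k)))) atTop (𝓝 1) :=
      hbinv_tend.comp hκ
    have hFu : ∀ i, PFAux.F f u i = u i + lam0 := by
      intro i
      have hcont : Tendsto (fun k => PFAux.F f (z (φ (ψ (ψ2 k))))) atTop (𝓝 (PFAux.F f u)) :=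
        ((PFAux.F_lip f hpos hmono hhom).continuous.tendsto u).comp hzu
      have h1 : Tendsto (fun k => PFAux.F f (z (φ (ψ (ψ2 k)))) i) atTop (𝓝 (PFAux.F f u i)) :=
        tendsto_pi_nhds.1 hcont i
      have h2 : Tendsto (fun k => binv (φ (ψ (ψ2 k))) * z (φ (ψ (ψ2 k))) i
          + mu (φ (ψ (ψ2 k)))) atTop (𝓝 (1 * u i + lam0)) :=
        (hbκ.mul (tendsto_pi_nhds.1 hzu i)).add hmuκ
      have h3 : (fun k => PFAux.F f (z (φ (ψ (ψ2 k)))) i)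
          = fun k => binv (φ (ψ (ψ2 k))) * z (φ (ψ (ψ2 k))) i + mu (φ (ψ (ψ2 k))) := by
        funext k; exact hFz _ i
      rw [h3] at h1
      have := tendsto_nhds_unique h1 h2
      rw [this]; ring
    refine ⟨Real.exp lam0, Real.exp_pos _, fun i => Real.exp (u i),
      fun i => Real.exp_pos _, ?_⟩
    funext i
    have h1 : f (fun i => Real.exp (u i)) i = Real.exp (PFAux.F f u i) :=
      (PFAux.exp_F f hpos u i).symm
    rw [h1, hFu i, Real.exp_add]
    show Real.exp (u i) * Real.exp lam0 = Real.exp lam0 * Real.exp (u i)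
    ring
  · -- Case B: min goes to -infinity; derive a contradiction with hdom
    exfalso
    push_neg at hA
    have hmB : Tendsto m atTop atBot := by
      rw [Filter.tendsto_atBot]
      intro b
      have h2 : ∀ᶠ k in atTop, ¬ (-(-b) ≤ m k) := (hA (-b)).mono fun k hk => not_le.2 hk
      filter_upwards [h2] with k hk
      rw [neg_neg] at hk
      push_neg at hk
      exact hk.le
    set w : ℕ → Fin n → ℝ := fun k i => z k i - m k with hwdef
    have hw0 : ∀ k i, 0 ≤ w k i := by
      intro k i; simp only [hwdef]; linarith [hmz k i]
    have hwzero : ∀ k, ∃ i, w k i = 0 := by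
      intro k
      obtain ⟨i, -, hi⟩ := Finset.exists_mem_eq_inf' hne (z k)
      exact ⟨i, by simp only [hwdef]; rw [← hi]; ring⟩
    obtain ⟨φ1, hφ1, hlim1⟩ := PFAux.extract_many n (fun i k => z k i) (fun i k => hzle k i)
    obtain ⟨φ2, hφ2, hlim2⟩ := PFAux.extract_many n (fun i k => -(w (φ1 k) i))
      (fun i k => by simpa using hw0 (φ1 k) i)
    set φ : ℕ → ℕ := fun k => φ1 (φ2 k) with hφdef
    have hφmono : StrictMono φ := hφ1.comp hφ2
    have hzlim : ∀ i : Fin n, Tendsto (fun k => z (φ k) i) atTop atBot ∨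
        ∃ L, Tendsto (fun k => z (φ k) i) atTop (𝓝 L) := by
      intro i
      rcases hlim1 i with h | ⟨L, h⟩
      · exact Or.inl (h.comp hφ2.tendsto_atTop)
      · exact Or.inr ⟨L, h.comp hφ2.tendsto_atTop⟩
    have hwlim : ∀ i : Fin n, Tendsto (fun k => w (φ k) i) atTop atTop ∨
        ∃ L, Tendsto (fun k => w (φ k) i) atTop (𝓝 L) := by
      intro i
      rcases hlim2 i with h | ⟨L, h⟩
      · left
        have h' : Tendsto (fun k => -(w (φ k) i)) atTop atBot := h
        rw [tendsto_neg_atBot_iff] at h'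
        exact h'
      · right
        refine ⟨-L, ?_⟩
        have h' : Tendsto (fun k => -(w (φ k) i)) atTop (𝓝 L) := h
        have := h'.neg
        simpa using this
    set P : Set (Fin n) := {i | ∃ L, Tendsto (fun k => z (φ k) i) atTop (𝓝 L)} with hPdef
    set B : Set (Fin n) := {i | ∃ L, Tendsto (fun k => w (φ k) i) atTop (𝓝 L)} with hBdef
    have hPbot : ∀ i, i ∉ P → Tendsto (fun k => z (φ k) i) atTop atBot := by
      intro i hi
      rcases hzlim i with h | h
      · exact h
      · exact absurd h hi
    have hBtop : ∀ i, i ∉ B → Tendsto (fun k => w (φ k) i) atTop atTop := by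
      intro i hi
      rcases hwlim i with h | h
      · exact h
      · exact absurd h hi
    have hmφ : Tendsto (fun k => m (φ k)) atTop atBot := hmB.comp hφmono.tendsto_atTop
    have hPne : P.Nonempty := by
      by_contra h
      push_neg at h
      have hall : ∀ᶠ k in atTop, ∀ i : Fin n, z (φ k) i < 0 :=
        Filter.eventually_all.2 fun i =>
          (hPbot i (by simp [h])).eventually_lt_atBot 0
      obtain ⟨k, hk⟩ := hall.exists
      obtain ⟨j, hj⟩ := hzzero (φ k)
      exact absurd hj (ne_of_lt (hk j))
    have hBne : B.Nonempty := by
      by_contra h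
      push_neg at h
      have hall : ∀ᶠ k in atTop, ∀ i : Fin n, 0 < w (φ k) i :=
        Filter.eventually_all.2 fun i =>
          (hBtop i (by simp [h])).eventually_gt_atTop 0
      obtain ⟨k, hk⟩ := hall.exists
      obtain ⟨j, hj⟩ := hwzero (φ k)
      exact absurd hj (ne_of_gt (hk j))
    have hdisj : Disjoint B P := by
      rw [Set.disjoint_left]
      intro i hiB hiP
      obtain ⟨L1, h1⟩ := hiB
      obtain ⟨L2, h2⟩ := hiP
      have h3 : Tendsto (fun k => m (φ k)) atTop (𝓝 (L2 - L1)) := by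
        have h4 := h2.sub h1
        have h5 : (fun k => z (φ k) i - w (φ k) i) = fun k => m (φ k) := by
          funext k; simp only [hwdef]; ring
        rwa [h5] at h4
      exact not_tendsto_nhds_of_tendsto_atBot hmφ _ h3
    -- B is a multiplicative MIN-dominion
    have hmin : MultMinDominion n f B := by
      refine ⟨hBne, ?_⟩
      have key : ∀ i : Fin n, ∃ Ci : ℝ, i ∈ B → ∀ t : ℝ, 0 ≤ t →
          f (fun j => Real.exp (Bᶜ.indicator (fun _ => t) j)) i ≤ Ci := by
        intro i
        by_cases hiB : i ∈ B
        · obtain ⟨L, hL⟩ := hiB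
          obtain ⟨R, hR⟩ := hL.bddAbove_range
          have hRk : ∀ k, w (φ k) i ≤ R := fun k => hR ⟨k, rfl⟩
          refine ⟨Real.exp (2 * R + A0), fun _ t ht => ?_⟩
          have hev : ∀ᶠ k in atTop, ∀ j : Fin n, j ∉ B → t ≤ w (φ k) j := by
            rw [Filter.eventually_all]
            intro j
            by_cases hjB : j ∈ B
            · filter_upwards with k hk
              exact absurd hjB hk
            · filter_upwards [(hBtop j hjB).eventually_ge_atTop t] with k hk _
              exact hk
          obtain ⟨k, hk⟩ := hev.exists
          have hvw : (fun j => Bᶜ.indicator (fun _ => t) j) ≤ w (φ k) := by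
            intro j
            show Bᶜ.indicator (fun _ => t) j ≤ w (φ k) j
            by_cases hjB : j ∈ B
            · rw [Set.indicator_of_notMem (Set.notMem_compl_iff.2 hjB)]
              exact hw0 _ _
            · rw [Set.indicator_of_mem (Set.mem_compl hjB)]
              exact hk j hjB
          have h1 := PFAux.F_mono f hpos hmono hvw i
          have h2 : PFAux.F f (w (φ k)) i = PFAux.F f (z (φ k)) i + (-(m (φ k))) := by
            have h2a : w (φ k) = fun j => z (φ k) j + (-(m (φ k))) := by
              funext j; simp only [hwdef]; ring
            rw [h2a, PFAux.F_add f hpos hhom]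
          have h3 := hFz (φ k) i
          have h4 : z (φ k) i = w (φ k) i + m (φ k) := by simp only [hwdef]; ring
          have h5 : PFAux.F f (w (φ k)) i ≤ 2 * R + A0 := by
            rw [h2, h3, h4]
            nlinarith [hbinv1 (φ k), hbinv2 (φ k), hmle (φ k), hw0 (φ k) i,
              hRk k, hmuU (φ k)]
          calc f (fun j => Real.exp (Bᶜ.indicator (fun _ => t) j)) i
              = Real.exp (PFAux.F f (fun j => Bᶜ.indicator (fun _ => t) j) i) :=
                (PFAux.exp_F f hpos _ i).symm
            _ ≤ Real.exp (2 * R + A0) := Real.exp_le_exp.2 (le_trans h1 h5)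
        · exact ⟨0, fun h => absurd h hiB⟩
      choose Cf hCf using key
      exact ⟨Finset.univ.sup' hne Cf, fun i hi t ht =>
        (hCf i hi t ht).trans (Finset.le_sup' Cf (Finset.mem_univ i))⟩
    -- P is a multiplicative MAX-dominion
    have hmax : MultMaxDominion n f P := by
      refine ⟨hPne, ?_⟩
      have key : ∀ j : Fin n, ∃ cj : ℝ, 0 < cj ∧ (j ∈ P → ∀ t : ℝ, 0 ≤ t →
          cj ≤ f (fun i => Real.exp (Pᶜ.indicator (fun _ => -t) i)) j) := by
        intro j
        by_cases hjP : j ∈ P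
        · obtain ⟨L, hL⟩ := hjP
          obtain ⟨R, hR⟩ := hL.bddBelow_range
          have hRk : ∀ k, R ≤ z (φ k) j := fun k => hR ⟨k, rfl⟩
          refine ⟨Real.exp (2 * R + a0), Real.exp_pos _, fun _ t ht => ?_⟩
          have hev : ∀ᶠ k in atTop, ∀ i : Fin n, i ∉ P → z (φ k) i ≤ -t := by
            rw [Filter.eventually_all]
            intro i
            by_cases hiP : i ∈ P
            · filter_upwards with k hk
              exact absurd hiP hk
            · filter_upwards [(hPbot i hiP).eventually_le_atBot (-t)] with k hk _
              exact hk
          obtain ⟨k, hk⟩ := hev.exists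
          have hvw : z (φ k) ≤ fun i => Pᶜ.indicator (fun _ => -t) i := by
            intro i
            show z (φ k) i ≤ Pᶜ.indicator (fun _ => -t) i
            by_cases hiP : i ∈ P
            · rw [Set.indicator_of_notMem (Set.notMem_compl_iff.2 hiP)]
              exact hzle _ _
            · rw [Set.indicator_of_mem (Set.mem_compl hiP)]
              exact hk i hiP
          have h1 := PFAux.F_mono f hpos hmono hvw j
          have h3 := hFz (φ k) j
          have h5 : 2 * R + a0 ≤ PFAux.F f (z (φ k)) j := by
            rw [h3]
            nlinarith [hbinv1 (φ k), hbinv2 (φ k), hzle (φ k) j, hRk k, hmuL (φ k)]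
          calc Real.exp (2 * R + a0)
              ≤ Real.exp (PFAux.F f (fun i => Pᶜ.indicator (fun _ => -t) i) j) :=
                Real.exp_le_exp.2 (le_trans h5 h1)
            _ = f (fun i => Real.exp (Pᶜ.indicator (fun _ => -t) i)) j :=
                PFAux.exp_F f hpos _ j
        · exact ⟨1, one_pos, fun h => absurd h hjP⟩
      choose cf hcf0 hcf using key
      refine ⟨Finset.univ.inf' hne cf, ?_, fun j hj t ht => ?_⟩
      · rw [Finset.lt_inf'_iff]
        exact fun i _ => hcf0 i
      · exact (Finset.inf'_le cf (Finset.mem_univ j)).trans (hcf j hj t ht)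
    exact hdom ⟨B, P, hdisj, hmin, hmax⟩
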